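/- Suppose every element of A has totally disconnected spectrum and φ : A → ℂ is continuous with φ(1) = 1 and φ(x)φ(y) ∈ σ(xy) for all x,y. Then φ(exp x) = exp(φ(x)) for every x ∈ A. -/

import Mathlib

set_option linter.unusedSectionVars false
set_option linter.unusedVariables false
set_option maxHeartbeats 1000000

open Filter Topology NormedSpace Pointwise

section Helpers


lemma tendsto_exp_sub_div {s : ℕ → ℂ} {w : ℕ → ℂ} {w0 : ℂ}
    (hs : Tendsto s atTop (𝓝 0)) (hs0 : ∀ᶠ n in atTop, s n ≠ 0)
    (hw : Tendsto w atTop (𝓝 w0)) :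
    Tendsto (fun n => (Complex.exp (s n * w n) - 1) / s n) atTop (𝓝 w0) := by
  set g : ℕ → ℂ := fun n => (Complex.exp (s n * w n) - 1) / s n with hg
  have hwb : ∀ᶠ n in atTop, ‖w n‖ ≤ ‖w0‖ + 1 := by
    have := hw.norm.eventually_le_const (show ‖w0‖ < ‖w0‖ + 1 by linarith)
    exact this
  have hsn : Tendsto (fun n => ‖s n‖) atTop (𝓝 0) := by simpa using hs.norm
  have hsb : ∀ᶠ n in atTop, ‖s n‖ ≤ 1 / (‖w0‖ + 1) := by
    have h1 : (0:ℝ) < 1 / (‖w0‖ + 1) := by positivity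
    exact hsn.eventually_le_const h1
  have hbound : ∀ᶠ n in atTop, ‖g n - w n‖ ≤ ‖s n‖ * ‖w n‖ ^ 2 := by
    filter_upwards [hwb, hsb, hs0] with n h1 h2 h3
    have hsw : ‖s n * w n‖ ≤ 1 := by
      rw [norm_mul]
      calc ‖s n‖ * ‖w n‖ ≤ (1 / (‖w0‖ + 1)) * (‖w0‖ + 1) := by
            apply mul_le_mul h2 h1 (norm_nonneg _) (by positivity)
        _ = 1 := by field_simp
    have habs : ‖Complex.exp (s n * w n) - 1 - s n * w n‖ ≤ ‖s n * w n‖ ^ 2 := by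
      simpa using
        Complex.norm_exp_sub_one_sub_id_le (x := s n * w n) (by simpa [map_mul] using hsw)
    have hgw : g n - w n = (Complex.exp (s n * w n) - 1 - s n * w n) / s n := by
      rw [hg]
      field_simp
    rw [hgw, norm_div]
    rw [div_le_iff₀ (norm_pos_iff.mpr h3)]
    calc ‖Complex.exp (s n * w n) - 1 - s n * w n‖ ≤ ‖s n * w n‖ ^ 2 := habs
      _ = ‖s n‖ ^2 * ‖w n‖ ^ 2 := by rw [norm_mul]; ring
      _ = ‖s n‖ * ‖w n‖ ^ 2 * ‖s n‖ := by ring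
  have hzz : Tendsto (fun n => ‖s n‖ * ‖w n‖ ^ 2) atTop (𝓝 0) := by
    have := hsn.mul ((hw.norm.pow 2))
    simpa using this
  have hdiff : Tendsto (fun n => g n - w n) atTop (𝓝 0) :=
    squeeze_zero_norm' hbound hzz
  have := hw.add hdiff
  simpa using this

lemma sel_est {P g1 g2 T1 T2 μ1 μ2 c : ℂ} {R0 R1 : ℝ}
    (hμ1 : ‖μ1‖ ≤ R0) (hμ2 : ‖μ2‖ ≤ R0)
    (hc1 : ‖μ1 - c‖ ≤ R1) (hc2 : ‖μ2 - c‖ ≤ R1) (hR1 : 1 ≤ R1)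
    (hT1 : ‖T1‖ * R0 ≤ 1/2) (hT2 : ‖T2‖ * R0 ≤ 1/2) (hT1' : ‖T1‖ * R1 ≤ 1/36)
    (e1 : (μ1 - c) * Complex.exp (T1 * μ1) = P * g1)
    (e2 : (μ2 - c) * Complex.exp (T2 * μ2) = P * g2) :
    ‖μ1 - μ2‖ ≤ 6 * (‖P‖ * ‖g1 - g2‖) + 36 * (R0 * R1) * ‖T1 - T2‖ := by
  have hR0 : 0 ≤ R0 := le_trans (norm_nonneg μ1) hμ1
  have hT1n : 0 ≤ ‖T1‖ := norm_nonneg _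
  have hT2n : 0 ≤ ‖T2‖ := norm_nonneg _
  have key : (μ1 - μ2) * Complex.exp (T1*μ2) =
      P * (g1 - g2) + (μ2 - c) * (Complex.exp (T2*μ2) - Complex.exp (T1*μ2))
        - (μ1 - c) * (Complex.exp (T1*μ1) - Complex.exp (T1*μ2)) := by
    linear_combination e1 - e2
  -- basic exp norm bounds
  have habs : ∀ z : ℂ, ‖z‖ ≤ 1 → (1/3 : ℝ) ≤ ‖Complex.exp z‖ ∧ ‖Complex.exp z‖ ≤ 3 := by
    intro z hz
    rw [Complex.norm_exp]
    have h1 : |z.re| ≤ 1 := le_trans (by simpa using Complex.abs_re_le_norm z) hz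
    have he3 : Real.exp 1 ≤ 3 := by
      have := Real.exp_one_lt_d9
      linarith
    obtain ⟨ha, hb⟩ := abs_le.mp h1
    have hpos := Real.exp_pos 1
    have h4 : Real.exp 1 * (Real.exp 1)⁻¹ = 1 := mul_inv_cancel₀ (ne_of_gt hpos)
    constructor
    · have h2 : Real.exp (-1) ≤ Real.exp z.re := Real.exp_le_exp.mpr (by linarith)
      have h3 : (1/3 : ℝ) ≤ Real.exp (-1) := by
        rw [Real.exp_neg]
        nlinarith
      linarith
    · have h2 : Real.exp z.re ≤ Real.exp 1 := Real.exp_le_exp.mpr (by linarith)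
      linarith
  have hT1μ2 : ‖T1 * μ2‖ ≤ 1 := by
    rw [norm_mul]
    calc ‖T1‖ * ‖μ2‖ ≤ ‖T1‖ * R0 := by
          apply mul_le_mul_of_nonneg_left hμ2 hT1n
      _ ≤ 1 := by linarith
  obtain ⟨hlow, hup⟩ := habs _ hT1μ2
  -- difference bounds
  have hd1 : ‖Complex.exp (T2*μ2) - Complex.exp (T1*μ2)‖ ≤ 6 * R0 * ‖T1 - T2‖ := by
    have hfac : Complex.exp (T2*μ2) - Complex.exp (T1*μ2)
        = Complex.exp (T1*μ2) * (Complex.exp ((T2 - T1)*μ2) - 1) := by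
      rw [mul_sub, ← Complex.exp_add]
      ring_nf
    have harg : ‖(T2 - T1)*μ2‖ ≤ 1 := by
      rw [norm_mul]
      have : ‖T2 - T1‖ ≤ ‖T1‖ + ‖T2‖ := by
        calc ‖T2 - T1‖ ≤ ‖T2‖ + ‖T1‖ := norm_sub_le _ _
          _ = ‖T1‖ + ‖T2‖ := by ring
      nlinarith [norm_nonneg μ2, norm_nonneg (T2 - T1)]
    have hsmall : ‖Complex.exp ((T2 - T1)*μ2) - 1‖ ≤ 2 * ‖(T2-T1)*μ2‖ := by
      simpa using
        Complex.norm_exp_sub_one_le (x := (T2-T1)*μ2) (by simpa [map_mul] using harg)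
    rw [hfac, norm_mul]
    have h1 : ‖(T2-T1)*μ2‖ ≤ ‖T1 - T2‖ * R0 := by
      rw [norm_mul, norm_sub_rev]
      exact mul_le_mul_of_nonneg_left hμ2 (norm_nonneg _)
    nlinarith [norm_nonneg (Complex.exp ((T2 - T1)*μ2) - 1), norm_nonneg (T1 - T2)]
  have hd2 : ‖Complex.exp (T1*μ1) - Complex.exp (T1*μ2)‖ ≤ 6 * ‖T1‖ * ‖μ1 - μ2‖ := by
    have hfac : Complex.exp (T1*μ1) - Complex.exp (T1*μ2)
        = Complex.exp (T1*μ2) * (Complex.exp (T1*(μ1 - μ2)) - 1) := by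
      rw [mul_sub, ← Complex.exp_add]
      ring_nf
    have harg : ‖T1*(μ1 - μ2)‖ ≤ 1 := by
      rw [norm_mul]
      have h2 : ‖μ1 - μ2‖ ≤ 2 * R0 := by
        calc ‖μ1 - μ2‖ ≤ ‖μ1‖ + ‖μ2‖ := norm_sub_le _ _
          _ ≤ 2 * R0 := by linarith
      nlinarith [norm_nonneg (μ1 - μ2)]
    have hsmall : ‖Complex.exp (T1*(μ1-μ2)) - 1‖ ≤ 2 * ‖T1*(μ1-μ2)‖ := by
      simpa using
        Complex.norm_exp_sub_one_le (x := T1*(μ1-μ2)) (by simpa [map_mul] using harg)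
    rw [norm_mul] at hsmall
    rw [hfac, norm_mul]
    nlinarith [norm_nonneg (Complex.exp (T1*(μ1 - μ2)) - 1), norm_nonneg (μ1 - μ2)]
  -- put it together
  have hln : ‖μ1 - μ2‖ * (1/3) ≤ ‖P‖ * ‖g1 - g2‖ + R1 * (6 * R0 * ‖T1 - T2‖)
      + R1 * (6 * ‖T1‖ * ‖μ1 - μ2‖) := by
    have h1 : ‖μ1 - μ2‖ * (1/3) ≤ ‖(μ1 - μ2) * Complex.exp (T1*μ2)‖ := by
      rw [norm_mul]
      nlinarith [norm_nonneg (μ1 - μ2)]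
    have h2 : ‖(μ1 - μ2) * Complex.exp (T1*μ2)‖ ≤
        ‖P‖ * ‖g1 - g2‖ + R1 * (6 * R0 * ‖T1 - T2‖) + R1 * (6 * ‖T1‖ * ‖μ1 - μ2‖) := by
      rw [key]
      calc ‖P * (g1 - g2) + (μ2 - c) * (Complex.exp (T2*μ2) - Complex.exp (T1*μ2))
            - (μ1 - c) * (Complex.exp (T1*μ1) - Complex.exp (T1*μ2))‖
          ≤ ‖P * (g1 - g2)‖ + ‖(μ2 - c) * (Complex.exp (T2*μ2) - Complex.exp (T1*μ2))‖
            + ‖(μ1 - c) * (Complex.exp (T1*μ1) - Complex.exp (T1*μ2))‖ := by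
            apply le_trans (norm_sub_le _ _)
            have := norm_add_le (P * (g1 - g2)) ((μ2 - c) * (Complex.exp (T2*μ2) - Complex.exp (T1*μ2)))
            linarith
        _ ≤ ‖P‖ * ‖g1 - g2‖ + R1 * (6 * R0 * ‖T1 - T2‖) + R1 * (6 * ‖T1‖ * ‖μ1 - μ2‖) := by
            rw [norm_mul, norm_mul, norm_mul]
            have b1 := mul_le_mul hc2 hd1 (norm_nonneg _) (le_trans (norm_nonneg _) hc2)
            have b2 := mul_le_mul hc1 hd2 (norm_nonneg _) (le_trans (norm_nonneg _) hc1)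
            linarith
    linarith
  have hcoef : R1 * (6 * ‖T1‖) ≤ 1/6 := by nlinarith
  nlinarith [norm_nonneg (μ1 - μ2), norm_nonneg P, norm_nonneg (g1 - g2), norm_nonneg (T1 - T2),
    mul_nonneg (mul_nonneg hR0 (le_trans zero_le_one hR1)) (norm_nonneg (T1 - T2))]

end Helpers

variable {A : Type*} [NormedRing A] [NormedAlgebra ℂ A] [CompleteSpace A]

noncomputable instance instNormedAlgebraRatOfComplex : NormedAlgebra ℚ A :=
  NormedAlgebra.restrictScalars ℚ ℂ A

section Spec




noncomputable def Bc (a : A) : Subalgebra ℂ A := Subalgebra.centralizer ℂ (Set.centralizer {a})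

variable (a : A)

lemma a_mem_Bc : a ∈ Bc a := fun s hs => (hs a rfl).symm

lemma Bc_le_centralizer {b : A} (hb : b ∈ Bc a) : b ∈ Set.centralizer {a} := by
  intro m hm
  rcases hm with rfl
  exact hb m (fun n hn => by rcases hn with rfl; rfl)

lemma Bc_comm {b c : A} (hb : b ∈ Bc a) (hc : c ∈ Bc a) : b * c = c * b :=
  (hb c (Bc_le_centralizer a hc)).symm

lemma Bc_isClosed : IsClosed ((Bc a : Set A)) := by
  have h : (Bc a : Set A) = ⋂ s ∈ Set.centralizer {a}, {b | s * b = b * s} := by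
    ext b
    simp only [SetLike.mem_coe, Set.mem_iInter, Set.mem_setOf_eq]
    exact ⟨fun h s hs => h s hs, fun h s hs => h s hs⟩
  rw [h]
  exact isClosed_biInter fun s _ => isClosed_eq (by fun_prop) (by fun_prop)

lemma Bc_inv_mem {b : A} (hb : b ∈ Bc a) (hu : IsUnit b) (w : A)
    (hw1 : w * b = 1) (hw2 : b * w = 1) : w ∈ Bc a := by
  intro s hs
  have h1 : s * b = b * s := hb s hs
  calc s * w = (w * b) * s * w := by rw [hw1, one_mul]
    _ = w * (b * s) * w := by noncomm_ring
    _ = w * (s * b) * w := by rw [← h1]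
    _ = w * s * (b * w) := by noncomm_ring
    _ = w * s := by rw [hw2, mul_one]

noncomputable instance Bc_normedCommRing : NormedCommRing (Bc a) :=
  { (inferInstance : NormedRing (Bc a)) with
    mul_comm := fun b c => Subtype.ext (Bc_comm a b.2 c.2) }

instance Bc_completeSpace : CompleteSpace (Bc a) :=
  (Bc_isClosed a).completeSpace_coe

lemma Bc_spectrum_eq (b : Bc a) : spectrum ℂ b = spectrum ℂ (b : A) := by
  ext z
  rw [spectrum.mem_iff, spectrum.mem_iff]
  constructor
  · intro h hu
    apply h
    -- z•1 - b is unit in A; build unit in Bc a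
    set c : A := algebraMap ℂ A z - (b : A) with hc
    have hcB : (algebraMap ℂ A z - (b : A)) ∈ Bc a := by
      exact Subalgebra.sub_mem _ (Subalgebra.algebraMap_mem _ z) b.2
    obtain ⟨u, hu'⟩ := hu
    have hw1 : (↑u⁻¹ : A) * c = 1 := by rw [← hu']; exact u.inv_mul
    have hw2 : c * (↑u⁻¹ : A) = 1 := by rw [← hu']; exact u.mul_inv
    have hwB : (↑u⁻¹ : A) ∈ Bc a := Bc_inv_mem a hcB ⟨u, hu'⟩ _ hw1 hw2
    refine ⟨⟨⟨c, hcB⟩, ⟨(↑u⁻¹ : A), hwB⟩, ?_, ?_⟩, ?_⟩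
    · exact Subtype.ext hw2
    · exact Subtype.ext hw1
    · exact Subtype.ext rfl
  · intro h hu
    apply h
    exact hu.map (Bc a).val

theorem spectrum_exp_subset (a : A) :
    spectrum ℂ (exp a) ⊆ Complex.exp '' spectrum ℂ a := by
  intro z hz
  set aB : Bc a := ⟨a, a_mem_Bc a⟩ with haB
  have hcoe : ((exp aB : Bc a) : A) = exp a := by
    have := map_exp (Bc a).val continuous_subtype_val aB
    simpa using this
  have hz' : z ∈ spectrum ℂ (exp aB) := by
    rw [Bc_spectrum_eq, hcoe]; exact hz
  obtain ⟨χ, hχ⟩ := WeakDual.CharacterSpace.mem_spectrum_iff_exists.mp hz'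
  refine ⟨χ aB, ?_, ?_⟩
  · have := AlgHom.apply_mem_spectrum (R := ℂ) χ aB
    rwa [Bc_spectrum_eq] at this
  · rw [← hχ, map_exp χ (map_continuous χ) aB, Complex.exp_eq_exp_ℂ]

end Spec






lemma tendsto_slope_exp (x : A) (c : ℂ) :
    Tendsto (fun r : ℂ => r⁻¹ • (exp (r • x) - Complex.exp (r * c) • (1:A)))
      (𝓝[≠] (0:ℂ)) (𝓝 (x - c • 1)) := by
  have h1 : HasDerivAt (fun u : ℂ => exp (u • x)) x 0 := by
    have := hasDerivAt_exp_smul_const (𝕂 := ℂ) x (0:ℂ)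
    simpa using this
  have h2 : HasDerivAt (fun r : ℂ => Complex.exp (r * c) • (1:A)) (c • 1) 0 := by
    have h3 : HasDerivAt (fun r : ℂ => r * c) c 0 := hasDerivAt_mul_const c
    have h4 := h3.cexp
    have h5 := h4.smul_const (1:A)
    simpa using h5
  have hd := h1.sub h2
  have ht := hasDerivAt_iff_tendsto_slope.mp hd
  have hfun : slope (fun r : ℂ => exp (r • x) - Complex.exp (r * c) • (1:A)) 0
      = fun r : ℂ => r⁻¹ • (exp (r • x) - Complex.exp (r * c) • (1:A)) := by
    funext r
    rw [slope_def_module]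
    simp
  simp only [Pi.sub_def] at ht
  rwa [hfun] at ht

lemma pin_step [Nontrivial A] (x : A) (c : ℂ) {s : ℂ} (hs : s ≠ 0) (n : ℕ) :
    spectrum ℂ ((s⁻¹ • (exp (s • x) - Complex.exp (s * c) • (1:A))) * exp (((n:ℂ) * s) • x))
      ⊆ (fun μ => Complex.exp (((n:ℂ)*s) * μ)
          * ((Complex.exp (s * μ) - Complex.exp (s*c)) / s)) '' spectrum ℂ x := by
  set u := exp (s • x) with hu_def
  set e := Complex.exp (s * c) with he_def
  have hxn : exp (((n:ℂ)*s) • x) = u ^ n := by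
    rw [mul_smul, Nat.cast_smul_eq_nsmul, exp_nsmul]
  have hprod : (s⁻¹ • (u - e • 1)) * exp (((n:ℂ)*s) • x) = s⁻¹ • (u^(n+1) - e • u^n) := by
    rw [hxn, smul_mul_assoc]
    congr 1
    rw [sub_mul, smul_mul_assoc, one_mul, ← pow_succ']
  rw [hprod]
  have hunit : (s⁻¹ : ℂ) • (u^(n+1) - e • u^n) = (Units.mk0 s hs)⁻¹ • (u^(n+1) - e • u^n) := by
    simp [Units.smul_def]
  rw [hunit, spectrum.unit_smul_eq_smul]
  have hpoly : spectrum ℂ (u^(n+1) - e • u^n)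
      = (fun z => z^(n+1) - e * z^n) '' spectrum ℂ u := by
    have hdeg : 0 < (Polynomial.X^(n+1) - Polynomial.C e * Polynomial.X^n : Polynomial ℂ).degree := by
      have h1 : (Polynomial.C e * Polynomial.X^n : Polynomial ℂ).degree
          < (Polynomial.X^(n+1) : Polynomial ℂ).degree := by
        rw [Polynomial.degree_X_pow]
        apply lt_of_le_of_lt (Polynomial.degree_C_mul_X_pow_le n e)
        exact_mod_cast Nat.lt_succ_self n
      rw [Polynomial.degree_sub_eq_left_of_degree_lt h1, Polynomial.degree_X_pow]
      exact_mod_cast Nat.succ_pos n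
    have hsm := spectrum.map_polynomial_aeval_of_degree_pos u
      (Polynomial.X^(n+1) - Polynomial.C e * Polynomial.X^n) hdeg
    have haev : Polynomial.aeval u (Polynomial.X^(n+1) - Polynomial.C e * Polynomial.X^n)
        = u^(n+1) - e • u^n := by
      simp [Algebra.smul_def]
    have hev : (fun k : ℂ => Polynomial.eval k (Polynomial.X^(n+1) - Polynomial.C e * Polynomial.X^n))
        = fun z : ℂ => z^(n+1) - e * z^n := by
      funext k; simp
    rw [haev, hev] at hsm
    exact hsm
  rw [hpoly]
  intro z hz
  obtain ⟨y, hy, rfl⟩ := hz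
  obtain ⟨v, hv, rfl⟩ := hy
  have hv' : v ∈ Complex.exp '' spectrum ℂ (s • x) := spectrum_exp_subset _ hv
  obtain ⟨w, hw, rfl⟩ := hv'
  have hsx : spectrum ℂ (s • x) = s • spectrum ℂ x := by
    have := spectrum.unit_smul_eq_smul x (Units.mk0 s hs)
    simpa [Units.smul_def] using this
  rw [hsx] at hw
  obtain ⟨μ, hμ, rfl⟩ := hw
  refine ⟨μ, hμ, ?_⟩
  have e1 : (Complex.exp (s • μ))^n = Complex.exp (((n:ℂ)*s)*μ) := by
    rw [← Complex.exp_nat_mul]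
    congr 1
    simp [smul_eq_mul]; ring
  have e2 : (Complex.exp (s • μ))^(n+1) = Complex.exp (s*μ) * Complex.exp (((n:ℂ)*s)*μ) := by
    rw [pow_succ', e1]
    norm_num [smul_eq_mul]
  show _ = (Units.mk0 s hs)⁻¹ • ((Complex.exp (s • μ))^(n+1) - e * (Complex.exp (s • μ))^n)
  rw [e1, e2, Units.smul_def, smul_eq_mul]
  have : ((Units.mk0 s hs)⁻¹ : ℂˣ) = (Units.mk0 s hs)⁻¹ := rfl
  have hcoe : (((Units.mk0 s hs)⁻¹ : ℂˣ) : ℂ) = s⁻¹ := rfl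
  rw [hcoe]
  have hmu : s • μ = s * μ := rfl
  field_simp










theorem stmt_7 (htd : ∀ x : A, IsTotallyDisconnected (spectrum ℂ x))
    (φ : A → ℂ) (hc : Continuous φ)
    (hone : φ 1 = 1)
    (hmul : ∀ x y : A, φ x * φ y ∈ spectrum ℂ (x * y)) :
    ∀ x : A, φ (NormedSpace.exp x) = Complex.exp (φ x) := by
  rcases subsingleton_or_nontrivial A with hS | hN
  · intro x
    exfalso
    have h := hmul 1 1
    rw [spectrum.of_subsingleton] at h
    exact h
  intro x
  have hKne : (spectrum ℂ x).Nonempty := spectrum.nonempty x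
  have hKcp : IsCompact (spectrum ℂ x) := spectrum.isCompact x
  set f : ℂ → ℂ := fun t => φ (exp (t • x)) with hf_def
  have hfc : Continuous f := hc.comp (exp_continuous.comp (continuous_id.smul continuous_const))
  have hf0 : f 0 = 1 := by
    simp only [hf_def]
    rw [zero_smul, exp_zero, hone]
  have hkey : ∀ w h : ℂ, f (w + h) * f (w - h) = f w * f w := by
    intro w h0
    have hmem : ∀ h : ℂ, f (w + h) * f (w - h) ∈ spectrum ℂ (exp ((2*w) • x)) := by
      intro h
      have hcomm : Commute ((w+h) • x) ((w-h) • x) :=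
        ((Commute.refl x).smul_left (w+h)).smul_right (w-h)
      have h2 : exp ((w+h) • x) * exp ((w-h) • x) = exp ((2*w) • x) := by
        rw [← exp_add_of_commute hcomm, ← add_smul]
        congr 1
        ring
      have := hmul (exp ((w+h) • x)) (exp ((w-h) • x))
      rwa [h2] at this
    set g : ℂ → ℂ := fun h => f (w + h) * f (w - h) with hg_def
    have hgc : Continuous g := (hfc.comp (continuous_const.add continuous_id)).mul
      (hfc.comp (continuous_const.sub continuous_id))
    have hrange : Set.range g ⊆ spectrum ℂ (exp ((2*w) • x)) :=
      Set.range_subset_iff.mpr hmem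
    have hpre : IsPreconnected (Set.range g) := by
      rw [← Set.image_univ]
      exact isPreconnected_univ.image g hgc.continuousOn
    have hss := htd (exp ((2*w) • x)) _ hrange hpre
    have heq := hss (Set.mem_range_self h0) (Set.mem_range_self 0)
    simpa [hg_def] using heq
  have hom : ∀ u v : ℂ, f (u + v) = f u * f v := by
    intro u v
    have h1 := hkey ((u+v)/2) ((u-v)/2)
    have e1 : (u+v)/2 + (u-v)/2 = u := by ring
    have e2 : (u+v)/2 - (u-v)/2 = v := by ring
    rw [e1, e2] at h1
    have h2 := hkey ((u+v)/2) ((u+v)/2)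
    have e3 : (u+v)/2 + (u+v)/2 = u + v := by ring
    have e4 : (u+v)/2 - (u+v)/2 = 0 := by ring
    rw [e3, e4, hf0, mul_one] at h2
    rw [h2, ← h1]
  have hpow : ∀ (n : ℕ) (t : ℂ), f ((n:ℂ) * t) = f t ^ n := by
    intro n
    induction n with
    | zero => intro t; simpa using hf0
    | succ k ih =>
      intro t
      have hc1 : ((k+1 : ℕ):ℂ) * t = (k:ℂ)*t + t := by push_cast; ring
      rw [hc1, hom, ih, pow_succ]
  -- main per-c claim
  have main : ∀ c : ℂ, c ∉ spectrum ℂ x → f 1 = Complex.exp (φ (x - c • 1) + c) := by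
    intro c hcK
    set P := φ (x - c • (1:A)) with hP_def
    have hPmem : P ∈ spectrum ℂ (x - c • (1:A)) := by
      have h := hmul (x - c • (1:A)) 1
      rwa [hone, mul_one, mul_one] at h
    have hPK : P + c ∈ spectrum ℂ x := by
      have hsub : spectrum ℂ x - {c} = spectrum ℂ (x - c • (1:A)) := by
        have h := spectrum.sub_singleton_eq x c
        rwa [Algebra.algebraMap_eq_smul_one] at h
      rw [← hsub] at hPmem
      rcases Set.mem_sub.mp hPmem with ⟨k, hk, c', hc', hkc⟩
      rw [Set.mem_singleton_iff] at hc'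
      rw [hc'] at hkc
      have hPk : P + c = k := by rw [← hkc]; ring
      rwa [hPk]
    have hPne : P ≠ 0 := by
      intro h0
      apply hcK
      rw [h0, zero_add] at hPK
      exact hPK
    -- constants
    set R0 : ℝ := ‖x‖ * ‖(1:A)‖ + 1 with hR0_def
    have hR0pos : 1 ≤ R0 := by
      have : (0:ℝ) ≤ ‖x‖ * ‖(1:A)‖ := mul_nonneg (norm_nonneg _) (norm_nonneg _)
      rw [hR0_def]; linarith
    have hR0bd : ∀ μ ∈ spectrum ℂ x, ‖μ‖ ≤ R0 := by
      intro μ h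
      have := spectrum.norm_le_norm_mul_of_mem h
      rw [hR0_def]; linarith
    set R1 : ℝ := R0 + ‖c‖ + 1 with hR1_def
    have hR11 : 1 ≤ R1 := by
      have := norm_nonneg c
      rw [hR1_def]; linarith
    have hR1bd : ∀ μ ∈ spectrum ℂ x, ‖μ - c‖ ≤ R1 := by
      intro μ h
      calc ‖μ - c‖ ≤ ‖μ‖ + ‖c‖ := norm_sub_le _ _
        _ ≤ R1 := by have := hR0bd μ h; rw [hR1_def]; linarith
    have hsumpos : 0 < R0 + R1 := by linarith
    set δ : ℝ := 1 / (72 * (R0 + R1)^2) with hδ_def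
    have h72 : 0 < 72 * (R0 + R1)^2 := by positivity
    have hδpos : 0 < δ := by rw [hδ_def]; positivity
    have hδle : ∀ r : ℝ, 0 ≤ r → r ≤ R0 + R1 → δ * r ≤ 1/72 := by
      intro r h0 hle
      rw [hδ_def, div_mul_eq_mul_div, div_le_div_iff₀ h72 (by norm_num)]
      nlinarith
    have hδR0 : δ * R0 ≤ 1/2 := le_trans (hδle R0 (by linarith) (by linarith)) (by norm_num)
    have hδR1 : δ * R1 ≤ 1/36 := le_trans (hδle R1 (by linarith) (by linarith)) (by norm_num)
    -- existence of μ for T > 0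
    have hex : ∀ T : ℝ, 0 < T → ∃ μ ∈ spectrum ℂ x,
        (μ - c) * Complex.exp ((T:ℂ) * μ) = P * f (T:ℂ) := by
      intro T hT
      set b : ℕ → A := fun n => ((T:ℂ)/n)⁻¹ •
        (exp (((T:ℂ)/n) • x) - Complex.exp (((T:ℂ)/n) * c) • (1:A)) with hb_def
      have hsne : ∀ n : ℕ, 1 ≤ n → ((T:ℂ)/n) ≠ 0 := by
        intro n hn
        apply div_ne_zero
        · exact_mod_cast ne_of_gt hT
        · exact_mod_cast Nat.cast_ne_zero.mpr (by omega)
      have hstep : ∀ n : ℕ, 1 ≤ n → ∃ μ ∈ spectrum ℂ x,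
          φ (b n) * f (T:ℂ) = Complex.exp ((T:ℂ) * μ)
            * ((Complex.exp (((T:ℂ)/n) * μ) - Complex.exp (((T:ℂ)/n) * c)) / ((T:ℂ)/n)) := by
        intro n hn
        have hs := hsne n hn
        have hn0 : (n:ℂ) ≠ 0 := Nat.cast_ne_zero.mpr (by omega)
        have hTn : ((n:ℂ) * ((T:ℂ)/n)) = (T:ℂ) := by
          rw [mul_comm]
          exact div_mul_cancel₀ _ hn0
        have hmem := hmul (b n) (exp ((T:ℂ) • x))
        have hmem' : φ (b n) * f (T:ℂ) ∈
            spectrum ℂ (b n * exp ((((n:ℂ)) * ((T:ℂ)/n)) • x)) := by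
          rw [hTn]; exact hmem
        have hsub := pin_step x c hs n hmem'
        obtain ⟨μ, hμ, hval⟩ := hsub
        refine ⟨μ, hμ, ?_⟩
        rw [← hval, hTn]
      have hchoice : ∀ n : ℕ, ∃ μ, μ ∈ spectrum ℂ x ∧ (1 ≤ n → φ (b n) * f (T:ℂ)
          = Complex.exp ((T:ℂ) * μ)
            * ((Complex.exp (((T:ℂ)/n) * μ) - Complex.exp (((T:ℂ)/n) * c)) / ((T:ℂ)/n))) := by
        intro n
        rcases Nat.lt_or_ge n 1 with h | h
        · exact ⟨hKne.choose, hKne.choose_spec, fun hh => absurd hh (by omega)⟩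
        · obtain ⟨μ, hμ, hv⟩ := hstep n h
          exact ⟨μ, hμ, fun _ => hv⟩
      choose μs hμsK hμseq using hchoice
      obtain ⟨μ0, hμ0K, ψ, hψ, hψt⟩ := hKcp.tendsto_subseq hμsK
      refine ⟨μ0, hμ0K, ?_⟩
      have hψ1 : ∀ᶠ k in atTop, 1 ≤ ψ k :=
        eventually_atTop.mpr ⟨1, fun k hk => le_trans hk hψ.le_apply⟩
      have hψtop : Tendsto ψ atTop atTop := hψ.tendsto_atTop
      have hstend : Tendsto (fun k => (T:ℂ)/(ψ k)) atTop (𝓝 0) := by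
        have hre : Tendsto (fun k => T/(ψ k : ℝ)) atTop (𝓝 0) :=
          (tendsto_const_div_atTop_nhds_zero_nat T).comp hψtop
        have h2 := (Complex.continuous_ofReal.tendsto 0).comp hre
        refine h2.congr fun k => ?_
        simp only [Function.comp_apply]
        push_cast
        ring
      have hsne' : ∀ᶠ k in atTop, (T:ℂ)/(ψ k) ≠ 0 := hψ1.mono fun k hk => hsne _ hk
      have hswithin : Tendsto (fun k => (T:ℂ)/(ψ k)) atTop (𝓝[≠] 0) := by
        rw [tendsto_nhdsWithin_iff]
        exact ⟨hstend, hsne'.mono fun k hk => Set.mem_compl_singleton_iff.mpr hk⟩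
      have hblim : Tendsto (fun k => b (ψ k)) atTop (𝓝 (x - c • 1)) :=
        (tendsto_slope_exp x c).comp hswithin
      have hLHS : Tendsto (fun k => φ (b (ψ k)) * f (T:ℂ)) atTop (𝓝 (P * f (T:ℂ))) :=
        ((hc.tendsto _).comp hblim).mul_const _
      have hμtend : Tendsto (fun k => μs (ψ k)) atTop (𝓝 μ0) := hψt
      have hE1 : Tendsto (fun k => Complex.exp ((T:ℂ) * μs (ψ k))) atTop
          (𝓝 (Complex.exp ((T:ℂ)*μ0))) :=
        (Complex.continuous_exp.tendsto _).comp (hμtend.const_mul _)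
      have hfrac1 : Tendsto (fun k =>
          (Complex.exp (((T:ℂ)/(ψ k)) * μs (ψ k)) - 1)/((T:ℂ)/(ψ k))) atTop (𝓝 μ0) :=
        tendsto_exp_sub_div hstend hsne' hμtend
      have hfrac2 : Tendsto (fun k =>
          (Complex.exp (((T:ℂ)/(ψ k)) * c) - 1)/((T:ℂ)/(ψ k))) atTop (𝓝 c) :=
        tendsto_exp_sub_div hstend hsne' tendsto_const_nhds
      have hRHS : Tendsto (fun k => Complex.exp ((T:ℂ) * μs (ψ k))
          * ((Complex.exp (((T:ℂ)/(ψ k)) * μs (ψ k)) - Complex.exp (((T:ℂ)/(ψ k)) * c))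
            / ((T:ℂ)/(ψ k))))
          atTop (𝓝 (Complex.exp ((T:ℂ)*μ0) * (μ0 - c))) := by
        have hdiff := hfrac1.sub hfrac2
        refine (hE1.mul hdiff).congr fun k => ?_
        congr 1
        ring
      have heqev : ∀ᶠ k in atTop, φ (b (ψ k)) * f (T:ℂ) = Complex.exp ((T:ℂ) * μs (ψ k))
          * ((Complex.exp (((T:ℂ)/(ψ k)) * μs (ψ k)) - Complex.exp (((T:ℂ)/(ψ k)) * c))
            / ((T:ℂ)/(ψ k))) :=
        hψ1.mono fun k hk => hμseq (ψ k) hk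
      have hfin := tendsto_nhds_unique (hLHS.congr' heqev) hRHS
      rw [hfin]
      ring
    -- selection on [0,δ]
    have hex' : ∀ T : ℝ, ∃ μ, μ ∈ spectrum ℂ x ∧ (T ∈ Set.Icc (0:ℝ) δ →
        (μ - c) * Complex.exp ((T:ℂ) * μ) = P * f (T:ℂ)) := by
      intro T
      rcases lt_trichotomy T 0 with h | h | h
      · exact ⟨hKne.choose, hKne.choose_spec, fun hT => absurd hT.1 (not_le.mpr h)⟩
      · refine ⟨P + c, hPK, fun _ => ?_⟩
        subst h
        push_cast
        rw [zero_mul, Complex.exp_zero, hf0]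
        ring
      · obtain ⟨μ, hμ, hv⟩ := hex T h
        exact ⟨μ, hμ, fun _ => hv⟩
    choose msel hselK hseleq using hex'
    have hcont : ContinuousOn msel (Set.Icc (0:ℝ) δ) := by
      intro T1 hT1
      unfold ContinuousWithinAt
      rw [Metric.tendsto_nhds]
      intro ε hε
      have h1 : Tendsto (fun T2 : ℝ => ‖f (T2:ℂ) - f (T1:ℂ)‖) (𝓝 T1) (𝓝 0) := by
        have hft : Tendsto (fun T2 : ℝ => f (T2:ℂ)) (𝓝 T1) (𝓝 (f (T1:ℂ))) :=
          ((hfc.comp Complex.continuous_ofReal).tendsto T1)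
        have := (hft.sub_const (f (T1:ℂ))).norm
        simpa using this
      have h2 : Tendsto (fun T2 : ℝ => ‖((T2:ℂ)) - ((T1:ℂ))‖) (𝓝 T1) (𝓝 0) := by
        have h3 : Tendsto (fun T2 : ℝ => (T2:ℂ)) (𝓝 T1) (𝓝 (T1:ℂ)) :=
          Complex.continuous_ofReal.tendsto T1
        have := (h3.sub_const ((T1:ℝ):ℂ)).norm
        simpa using this
      have hmod : Tendsto (fun T2 : ℝ => 6 * (‖P‖ * ‖f (T2:ℂ) - f (T1:ℂ)‖)
          + 36 * (R0*R1) * ‖((T2:ℂ)) - ((T1:ℂ))‖) (𝓝 T1) (𝓝 0) := by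
        have := ((h1.const_mul ‖P‖).const_mul 6).add ((h2.const_mul (36*(R0*R1))))
        simpa [mul_assoc] using this
      have hev : ∀ᶠ T2 : ℝ in 𝓝 T1, (6 * (‖P‖ * ‖f (T2:ℂ) - f (T1:ℂ)‖)
          + 36 * (R0*R1) * ‖((T2:ℂ)) - ((T1:ℂ))‖) < ε := hmod.eventually_lt_const hε
      filter_upwards [nhdsWithin_le_nhds hev, self_mem_nhdsWithin] with T2 hlt hmem2
      rw [dist_eq_norm]
      have hnormT : ∀ T : ℝ, T ∈ Set.Icc (0:ℝ) δ → ‖(T:ℂ)‖ = T := by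
        intro T hT
        rw [Complex.norm_real, Real.norm_eq_abs]
        exact abs_of_nonneg hT.1
      have hb1 : ‖((T2:ℂ))‖ * R0 ≤ 1/2 := by
        rw [hnormT T2 hmem2]
        calc T2 * R0 ≤ δ * R0 := by
              apply mul_le_mul_of_nonneg_right hmem2.2 (by linarith)
          _ ≤ 1/2 := hδR0
      have hb2 : ‖((T1:ℂ))‖ * R0 ≤ 1/2 := by
        rw [hnormT T1 hT1]
        calc T1 * R0 ≤ δ * R0 := by
              apply mul_le_mul_of_nonneg_right hT1.2 (by linarith)
          _ ≤ 1/2 := hδR0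
      have hb3 : ‖((T2:ℂ))‖ * R1 ≤ 1/36 := by
        rw [hnormT T2 hmem2]
        calc T2 * R1 ≤ δ * R1 := by
              apply mul_le_mul_of_nonneg_right hmem2.2 (by linarith)
          _ ≤ 1/36 := hδR1
      have est := sel_est (hR0bd _ (hselK T2)) (hR0bd _ (hselK T1))
        (hR1bd _ (hselK T2)) (hR1bd _ (hselK T1)) hR11 hb1 hb2 hb3
        (hseleq T2 hmem2) (hseleq T1 hT1)
      exact lt_of_le_of_lt est hlt
    have himg : ((msel '' Set.Icc (0:ℝ) δ)).Subsingleton := by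
      apply htd x
      · rintro z ⟨t, ht, rfl⟩
        exact hselK t
      · exact (isPreconnected_Icc).image msel hcont
    have h0mem : (0:ℝ) ∈ Set.Icc (0:ℝ) δ := ⟨le_refl 0, le_of_lt hδpos⟩
    have hconst : ∀ T ∈ Set.Icc (0:ℝ) δ, msel T = msel 0 := fun T hT =>
      himg (Set.mem_image_of_mem _ hT) (Set.mem_image_of_mem _ h0mem)
    have hκc : msel 0 - c = P := by
      have h := hseleq 0 h0mem
      rw [Complex.ofReal_zero, zero_mul, Complex.exp_zero, hf0, mul_one, mul_one] at h
      exact h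
    have hfT : ∀ T ∈ Set.Icc (0:ℝ) δ, f (T:ℂ) = Complex.exp ((T:ℂ) * msel 0) := by
      intro T hT
      have he := hseleq T hT
      rw [hconst T hT, hκc] at he
      exact (mul_left_cancel₀ hPne he).symm
    obtain ⟨n, hn⟩ := exists_nat_one_div_lt hδpos
    have hmemn : (1/(n+1 : ℝ)) ∈ Set.Icc (0:ℝ) δ := ⟨by positivity, le_of_lt hn⟩
    have hfN := hfT _ hmemn
    have hone' : (1:ℂ) = ((n+1 : ℕ):ℂ) * (((1/(n+1:ℝ) : ℝ)):ℂ) := by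
      push_cast
      field_simp
    have hfone : f 1 = f ((((1/(n+1:ℝ) : ℝ)):ℂ)) ^ (n+1) := by
      rw [hone', hpow]
    rw [hfone, hfN, ← Complex.exp_nat_mul]
    have harg : ((n+1:ℕ):ℂ) * ((((1/(n+1:ℝ):ℝ)):ℂ) * msel 0) = msel 0 := by
      push_cast
      field_simp
    rw [harg]
    congr 1
    rw [← hκc]
    ring
  -- density step
  have hKint : interior (spectrum ℂ x) = ∅ := by
    by_contra h
    obtain ⟨z, hz⟩ := Set.nonempty_iff_ne_empty.mpr h
    obtain ⟨ε, hε, hball⟩ := Metric.isOpen_iff.mp isOpen_interior z hz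
    have hsub : Metric.ball z ε ⊆ spectrum ℂ x := hball.trans interior_subset
    have hpre : IsPreconnected (Metric.ball z ε) := (convex_ball z ε).isPreconnected
    have hss := htd x _ hsub hpre
    have h1 : z ∈ Metric.ball z ε := Metric.mem_ball_self hε
    have h2 : z + ((ε/2 : ℝ) : ℂ) ∈ Metric.ball z ε := by
      rw [Metric.mem_ball, dist_eq_norm]
      have : z + ((ε/2 : ℝ) : ℂ) - z = ((ε/2 : ℝ) : ℂ) := by ring
      rw [this, Complex.norm_real, Real.norm_eq_abs, abs_of_nonneg (by linarith)]
      linarith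
    have h3 := hss h2 h1
    have h4 : ((ε/2 : ℝ) : ℂ) = 0 := by
      have := sub_eq_zero.mpr h3
      rw [add_sub_cancel_left] at this
      exact this
    rw [Complex.ofReal_eq_zero] at h4
    linarith
  have hdense : Dense ((spectrum ℂ x)ᶜ) := interior_eq_empty_iff_dense_compl.mp hKint
  have hGcont : Continuous (fun c : ℂ => Complex.exp (φ (x - c • (1:A)) + c)) := by
    apply Complex.continuous_exp.comp
    exact ((hc.comp (continuous_const.sub (continuous_id.smul continuous_const))).add
      continuous_id)
  have hEq : (fun _ : ℂ => f 1) = fun c : ℂ => Complex.exp (φ (x - c • (1:A)) + c) :=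
    Continuous.ext_on hdense continuous_const hGcont (fun c hcK => main c hcK)
  have hfin := congrFun hEq 0
  simp only [zero_smul, sub_zero, add_zero] at hfin
  have : f 1 = φ (exp x) := by rw [hf_def]; simp [one_smul]
  rw [← this, hfin]
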